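/- arXiv:2509.12848 — 2 statements merged into one kernel-verified Lean document; each statement's English description precedes it below -/
import Mathlib

section
/- Key lemma, nondegenerate branches: assume the steady assumptions and let u ∈ USC(Γ) be a viscosity subsolution and v ∈ LSC(Γ) a viscosity supersolution of problem (P) such that max_Γ (u − v) = (u − v)(O). Set p̲_i = liminf_{t→0⁺}(u_i(t)−u_i(0))/t, p̄_i = limsup_{t→0⁺}(u_i(t)−u_i(0))/t, q̲_i = liminf_{t→0⁺}(v_i(t)−v_i(0))/t and q̄_i = limsup_{t→0⁺}(v_i(t)−v_i(0))/t. Then for every index i with a_i(O) > 0 (i.e. i ∉ 𝒟), one has p̲_i = p̄_i and q̲_i = q̄_i. -/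
open Set Filter Topology

namespace Paper

/-- Data of the junction problem (P): a junction with `N` edges of lengths `ℓ i`,
glued at the junction point `O` (parameter `0` of each edge), with a (possibly
degenerate) diffusion `a i`, Hamiltonians `H i`, a Kirchhoff nonlinearity `F`,
Dirichlet data `h i` and a constant `lam > 0`.  Functions on the junction `Γ`
are represented edge-wise: `u : Fin N → ℝ → ℝ`, where only the values of
`u i` on `[0, ℓ i]` are relevant and `u i 0` represents the value at `O`. -/
structure Data (N : ℕ) where
  ℓ : Fin N → ℝ
  ℓ_pos : ∀ i, 0 < ℓ i
  lam : ℝ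
  lam_pos : 0 < lam
  a : Fin N → ℝ → ℝ
  a_nonneg : ∀ i, ∀ t ∈ Set.Icc (0:ℝ) (ℓ i), 0 ≤ a i t
  a_cont : ∀ i, ContinuousOn (a i) (Set.Icc 0 (ℓ i))
  H : Fin N → ℝ → ℝ → ℝ
  H_cont : ∀ i, ContinuousOn (fun q : ℝ × ℝ => H i q.1 q.2)
      ((Set.Icc 0 (ℓ i)) ×ˢ (Set.univ : Set ℝ))
  F : ℝ → (Fin N → ℝ) → ℝ
  F_cont : Continuous (fun q : ℝ × (Fin N → ℝ) => F q.1 q.2)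
  h : Fin N → ℝ

variable {N : ℕ}

/-- A family of edge functions defines a function on `Γ`: values at `O` agree. -/
def Glued (u : Fin N → ℝ → ℝ) : Prop := ∀ i j : Fin N, u i 0 = u j 0

/-- `u ∈ USC(Γ)`. -/
def IsUSC (D : Data N) (u : Fin N → ℝ → ℝ) : Prop :=
  ∀ i, UpperSemicontinuousOn (u i) (Set.Icc 0 (D.ℓ i))

/-- `u ∈ LSC(Γ)`. -/
def IsLSC (D : Data N) (u : Fin N → ℝ → ℝ) : Prop :=
  ∀ i, LowerSemicontinuousOn (u i) (Set.Icc 0 (D.ℓ i))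

/-- Test functions in `C²(Γ)` (edge-wise C², glued at `O`). -/
def IsTest (φ : Fin N → ℝ → ℝ) : Prop :=
  Glued φ ∧ ∀ i, ContDiff ℝ 2 (φ i)

/-- `G_i(r,p,X,x) = λ r − a_i(x) X + H_i(x,p)`. -/
def G (D : Data N) (i : Fin N) (r p X t : ℝ) : ℝ :=
  D.lam * r - D.a i t * X + D.H i t p

/-- Local maximum point of an edge-wise function at an interior edge point. -/
def LocalMaxEdge (D : Data N) (w : Fin N → ℝ → ℝ) (i : Fin N) (t : ℝ) : Prop :=
  ∃ δ > 0, ∀ s ∈ Set.Icc (0:ℝ) (D.ℓ i), |s - t| < δ → w i s ≤ w i t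

def LocalMinEdge (D : Data N) (w : Fin N → ℝ → ℝ) (i : Fin N) (t : ℝ) : Prop :=
  ∃ δ > 0, ∀ s ∈ Set.Icc (0:ℝ) (D.ℓ i), |s - t| < δ → w i t ≤ w i s

/-- Local maximum point at the junction point `O`. -/
def LocalMaxO (D : Data N) (w : Fin N → ℝ → ℝ) : Prop :=
  ∃ δ > 0, ∀ j, ∀ s ∈ Set.Icc (0:ℝ) (D.ℓ j), s < δ → w j s ≤ w j 0

def LocalMinO (D : Data N) (w : Fin N → ℝ → ℝ) : Prop :=
  ∃ δ > 0, ∀ j, ∀ s ∈ Set.Icc (0:ℝ) (D.ℓ j), s < δ → w j 0 ≤ w j s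

/-- Local maximum point at the boundary vertex `v_i` (parameter `ℓ i`). -/
def LocalMaxVert (D : Data N) (w : Fin N → ℝ → ℝ) (i : Fin N) : Prop :=
  ∃ δ > 0, ∀ s ∈ Set.Icc (0:ℝ) (D.ℓ i), D.ℓ i - s < δ → w i s ≤ w i (D.ℓ i)

def LocalMinVert (D : Data N) (w : Fin N → ℝ → ℝ) (i : Fin N) : Prop :=
  ∃ δ > 0, ∀ s ∈ Set.Icc (0:ℝ) (D.ℓ i), D.ℓ i - s < δ → w i (D.ℓ i) ≤ w i s

/-- Viscosity subsolution of problem (P), junction viscosity sense. -/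
def IsSubsol (D : Data N) (u : Fin N → ℝ → ℝ) : Prop :=
  IsUSC D u ∧ Glued u ∧
  ∀ φ : Fin N → ℝ → ℝ, IsTest φ →
    ((∀ i, ∀ t ∈ Set.Ioo (0:ℝ) (D.ℓ i),
        LocalMaxEdge D (fun j s => u j s - φ j s) i t →
        G D i (u i t) (deriv (φ i) t) (deriv (deriv (φ i)) t) t ≤ 0) ∧
     (LocalMaxO D (fun j s => u j s - φ j s) →
        (∃ i, G D i (u i 0) (deriv (φ i) 0) (deriv (deriv (φ i)) 0) 0 ≤ 0) ∨
        (∀ i, D.F (u i 0) (fun j => deriv (φ j) 0) ≤ 0)) ∧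
     (∀ i, LocalMaxVert D (fun j s => u j s - φ j s) i →
        G D i (u i (D.ℓ i)) (deriv (φ i) (D.ℓ i)) (deriv (deriv (φ i)) (D.ℓ i)) (D.ℓ i) ≤ 0 ∨
        u i (D.ℓ i) ≤ D.h i))

/-- Viscosity supersolution of problem (P), junction viscosity sense. -/
def IsSupersol (D : Data N) (v : Fin N → ℝ → ℝ) : Prop :=
  IsLSC D v ∧ Glued v ∧
  ∀ φ : Fin N → ℝ → ℝ, IsTest φ →
    ((∀ i, ∀ t ∈ Set.Ioo (0:ℝ) (D.ℓ i),
        LocalMinEdge D (fun j s => v j s - φ j s) i t →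
        0 ≤ G D i (v i t) (deriv (φ i) t) (deriv (deriv (φ i)) t) t) ∧
     (LocalMinO D (fun j s => v j s - φ j s) →
        (∃ i, 0 ≤ G D i (v i 0) (deriv (φ i) 0) (deriv (deriv (φ i)) 0) 0) ∨
        (∀ i, 0 ≤ D.F (v i 0) (fun j => deriv (φ j) 0))) ∧
     (∀ i, LocalMinVert D (fun j s => v j s - φ j s) i →
        0 ≤ G D i (v i (D.ℓ i)) (deriv (φ i) (D.ℓ i)) (deriv (deriv (φ i)) (D.ℓ i)) (D.ℓ i) ∨
        D.h i ≤ v i (D.ℓ i)))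

/-- Assumption (Ham) for the Hamiltonian `H i`, with constant `C`. -/
def Ham (D : Data N) (C : ℝ) (i : Fin N) : Prop :=
  (∀ t ∈ Set.Icc (0:ℝ) (D.ℓ i), ∀ s ∈ Set.Icc (0:ℝ) (D.ℓ i), ∀ p : ℝ,
      |D.H i t p - D.H i s p| ≤ C * (1 + |p|) * |t - s|) ∧
  (∀ t ∈ Set.Icc (0:ℝ) (D.ℓ i), ∀ p q : ℝ, |D.H i t p - D.H i t q| ≤ C * |p - q|)

/-- Assumption (Hcoercive) for `H i` on the set `S`, with constant `C`. -/
def Coercive (D : Data N) (C : ℝ) (i : Fin N) (S : Set ℝ) : Prop :=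
  ∀ t ∈ S, ∀ p : ℝ, C⁻¹ * |p| - C ≤ D.H i t p

/-- Assumption (hyp-diff) for the diffusion `a i`. -/
def HypDiff (D : Data N) (i : Fin N) : Prop :=
  ∃ σ : ℝ → ℝ, (∃ C : NNReal, LipschitzOnWith C σ (Set.Icc 0 (D.ℓ i))) ∧
    ∀ t ∈ Set.Icc (0:ℝ) (D.ℓ i), D.a i t = (σ t) ^ 2

/-- Assumption (hyp-kirch) for the Kirchhoff nonlinearity `F`. -/
def Kirchhoff (D : Data N) : Prop :=
  (∀ (r s : ℝ) (p q : Fin N → ℝ), s ≤ r → (∀ i, p i ≤ q i) → D.F s q ≤ D.F r p) ∧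
  (∀ (r s : ℝ) (p q : Fin N → ℝ), s ≤ r → (∀ i, p i ≤ q i) → (∃ j, p j < q j) →
      D.F s q < D.F r p) ∧
  (∀ (i : Fin N) (r : ℝ) (p : Fin N → ℝ),
      Filter.Tendsto (fun z : ℝ => D.F r (Function.update p i z))
        Filter.atBot Filter.atTop)

/-- The steady assumptions (2.9). -/
def Steady (D : Data N) (C : ℝ) : Prop :=
  0 < C ∧ (∀ i, Ham D C i) ∧ (∀ i, HypDiff D i) ∧
  (∀ i, D.a i 0 = 0 → Coercive D C i (Set.Icc 0 (D.ℓ i))) ∧ Kirchhoff D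

/-- Assumption (hyp-dir). -/
def HypDir (D : Data N) (C : ℝ) : Prop :=
  ∀ i, 0 < D.a i (D.ℓ i) ∨
    ∃ δ > 0, Coercive D C i (Set.Icc (D.ℓ i - δ) (D.ℓ i))


/-- One-dimensional (first-order) superdifferential at `0⁺` of `w : [0,∞) → ℝ`:
`p ∈ D⁺w(0)` iff `w(t) ≤ w(0) + p t + o(t)` as `t → 0⁺`. -/
def D1plus (w : ℝ → ℝ) : Set ℝ :=
  {p | ∀ ε > 0, ∀ᶠ t in 𝓝[>] (0:ℝ), w t ≤ w 0 + p * t + ε * t}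

/-- One-dimensional (first-order) subdifferential at `0⁺`:
`q ∈ D⁻w(0)` iff `w(t) ≥ w(0) + q t + o(t)` as `t → 0⁺`. -/
def D1minus (w : ℝ → ℝ) : Set ℝ :=
  {q | ∀ ε > 0, ∀ᶠ t in 𝓝[>] (0:ℝ), w 0 + q * t - ε * t ≤ w t}

/-- `limsup_{t→0⁺} (w(t) − w(0))/t`, as an extended real. -/
noncomputable def diffQuotLimsup (w : ℝ → ℝ) : EReal :=
  Filter.limsup (fun t : ℝ => (((w t - w 0) / t : ℝ) : EReal)) (𝓝[>] (0:ℝ))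

/-- `liminf_{t→0⁺} (w(t) − w(0))/t`, as an extended real. -/
noncomputable def diffQuotLiminf (w : ℝ → ℝ) : EReal :=
  Filter.liminf (fun t : ℝ => (((w t - w 0) / t : ℝ) : EReal)) (𝓝[>] (0:ℝ))


lemma hasDerivAt_barrier (u0 β b c t : ℝ) (hc : c ≠ 0) :
    HasDerivAt (fun s : ℝ => u0 + β*s - (b/c^2)*(Real.exp (c*s) - 1 - c*s))
      (β - (b/c)*(Real.exp (c*t) - 1)) t := by
  have hf : HasDerivAt (fun s : ℝ => c * s) c t := by
    simpa using (hasDerivAt_id t).const_mul c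
  have h1 := hf.exp
  have h2 : HasDerivAt (fun s : ℝ => Real.exp (c*s) - 1 - c*s)
      (Real.exp (c*t) * c - c) t := by
    exact (h1.sub_const 1).sub hf
  have hβ : HasDerivAt (fun s : ℝ => u0 + β*s) β t := by
    have := (((hasDerivAt_id' t).const_mul β).const_add u0); rwa [mul_one] at this
  have h3 := hβ.sub (h2.const_mul (b/c^2))
  refine h3.congr_deriv ?_
  field_simp

lemma hasDerivAt_barrier' (β b c t : ℝ) (hc : c ≠ 0) :
    HasDerivAt (fun s : ℝ => β - (b/c)*(Real.exp (c*s) - 1))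
      (-(b * Real.exp (c*t))) t := by
  have hf : HasDerivAt (fun s : ℝ => c * s) c t := by
    simpa using (hasDerivAt_id t).const_mul c
  have h1 := ((hf.exp.sub_const 1).const_mul (b/c))
  have h2 := (hasDerivAt_const t β).sub h1
  refine h2.congr_deriv ?_
  field_simp
  ring

lemma deriv_barrier (u0 β b c : ℝ) (hc : c ≠ 0) :
    deriv (fun s : ℝ => u0 + β*s - (b/c^2)*(Real.exp (c*s) - 1 - c*s))
      = fun t => β - (b/c)*(Real.exp (c*t) - 1) :=
  funext fun t => (hasDerivAt_barrier u0 β b c t hc).deriv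

lemma deriv_deriv_barrier (u0 β b c : ℝ) (hc : c ≠ 0) :
    deriv (deriv (fun s : ℝ => u0 + β*s - (b/c^2)*(Real.exp (c*s) - 1 - c*s)))
      = fun t => -(b * Real.exp (c*t)) := by
  rw [deriv_barrier u0 β b c hc]
  exact funext fun t => (hasDerivAt_barrier' β b c t hc).deriv

lemma deriv_nbarrier (u0 β b c : ℝ) (hc : c ≠ 0) :
    deriv (fun s : ℝ => -(u0 + β*s - (b/c^2)*(Real.exp (c*s) - 1 - c*s)))
      = fun t => -(β - (b/c)*(Real.exp (c*t) - 1)) :=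
  funext fun t => ((hasDerivAt_barrier u0 β b c t hc).neg).deriv

lemma deriv_deriv_nbarrier (u0 β b c : ℝ) (hc : c ≠ 0) :
    deriv (deriv (fun s : ℝ => -(u0 + β*s - (b/c^2)*(Real.exp (c*s) - 1 - c*s))))
      = fun t => b * Real.exp (c*t) := by
  rw [deriv_nbarrier u0 β b c hc]
  exact funext fun t => by simpa using ((hasDerivAt_barrier' β b c t hc).neg).deriv

lemma contDiff_barrier (u0 β b c : ℝ) :
    ContDiff ℝ 2 (fun s : ℝ => u0 + β*s - (b/c^2)*(Real.exp (c*s) - 1 - c*s)) := by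
  apply ContDiff.sub
  · exact contDiff_const.add (contDiff_const.mul contDiff_id)
  · exact contDiff_const.mul
      (((Real.contDiff_exp.comp (contDiff_const.mul contDiff_id)).sub contDiff_const).sub
        (contDiff_const.mul contDiff_id))


lemma exp_sub_one_sub_le {x : ℝ} (h0 : 0 ≤ x) (h1 : x ≤ 1/2) :
    Real.exp x - 1 - x ≤ 2 * x ^ 2 := by
  have hx1 : x < 1 := by linarith
  have h := Real.exp_bound_div_one_sub_of_interval h0 hx1
  have h2 : (0:ℝ) < 1 - x := by linarith
  rw [le_div_iff₀ h2] at h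
  nlinarith [Real.exp_pos x, sq_nonneg x]

lemma usc_exists_max {K : Set ℝ} (hK : IsCompact K) (hne : K.Nonempty)
    {g : ℝ → ℝ} (hg : UpperSemicontinuousOn g K) :
    ∃ x ∈ K, ∀ y ∈ K, g y ≤ g x := by
  by_contra hcon
  push_neg at hcon
  have key : ∀ x : ℝ, ∃ y : ℝ, ∃ V : Set ℝ, x ∈ K →
      y ∈ K ∧ IsOpen V ∧ x ∈ V ∧ ∀ z ∈ V ∩ K, g z < g y := by
    intro x
    by_cases hx : x ∈ K
    · obtain ⟨y, hyK, hxy⟩ := hcon x hx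
      have hnb : {z | g z < g y} ∈ 𝓝[K] x := hg x hx (g y) hxy
      rcases mem_nhdsWithin.mp hnb with ⟨V, hVo, hxV, hVsub⟩
      exact ⟨y, V, fun _ => ⟨hyK, hVo, hxV, fun z hz => hVsub hz⟩⟩
    · exact ⟨0, ∅, fun h => absurd h hx⟩
  choose y V hyV using key
  obtain ⟨t, htK, hcover⟩ := hK.elim_nhds_subcover V
    (fun x hx => ((hyV x hx).2.1).mem_nhds (hyV x hx).2.2.1)
  have htne : t.Nonempty := by
    obtain ⟨x0, hx0⟩ := hne
    rcases mem_iUnion₂.mp (hcover hx0) with ⟨x, hxt, _⟩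
    exact ⟨x, hxt⟩
  obtain ⟨xs, hxst, hmaxf⟩ := t.exists_max_image (fun x => g (y x)) htne
  have h1 := hyV _ (htK _ hxst)
  have hyK : y xs ∈ K := h1.1
  rcases mem_iUnion₂.mp (hcover hyK) with ⟨x', hx't, hyV'⟩
  have h2 := hyV _ (htK _ hx't)
  have hlt : g (y xs) < g (y x') := h2.2.2.2 _ ⟨hyV', hyK⟩
  exact absurd (hmaxf _ hx't) (not_le.mpr hlt)

set_option maxHeartbeats 1600000 in
/-- Core one-dimensional lemma: a bounded-slope-barrier comparison argument showing
that the difference quotients of a viscosity subsolution on a uniformly elliptic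
branch have a limit (in `EReal`) at `0⁺`. -/
lemma core_sub (w A : ℝ → ℝ) (Hf : ℝ → ℝ → ℝ) (lam C a₀ B₀ δ₁ : ℝ)
    (hlam : 0 < lam) (hC : 0 < C) (ha₀ : 0 < a₀) (hδ₁ : 0 < δ₁)
    (hcδ : (C/a₀) * δ₁ ≤ 1/2)
    (haLB : ∀ t ∈ Set.Icc (0:ℝ) δ₁, a₀ ≤ A t)
    (hH0 : ∀ t ∈ Set.Icc (0:ℝ) δ₁, |Hf t 0| ≤ B₀)
    (hHLip : ∀ t ∈ Set.Icc (0:ℝ) δ₁, ∀ p : ℝ, Hf t 0 - C * |p| ≤ Hf t p)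
    (hUSC : UpperSemicontinuousOn w (Set.Icc 0 δ₁))
    (hvisc : ∀ T : ℝ, 0 < T → T ≤ δ₁ → ∀ t₀ ∈ Set.Ioo (0:ℝ) T, ∀ β b : ℝ, 0 < b →
      (∀ s ∈ Set.Icc (0:ℝ) T,
        w s - (w 0 + β*s - (b/(C/a₀)^2)*(Real.exp ((C/a₀)*s) - 1 - (C/a₀)*s))
          ≤ w t₀ - (w 0 + β*t₀ - (b/(C/a₀)^2)*(Real.exp ((C/a₀)*t₀) - 1 - (C/a₀)*t₀))) →
      lam * w t₀ - A t₀ * (-(b * Real.exp ((C/a₀)*t₀)))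
        + Hf t₀ (β - (b/(C/a₀))*(Real.exp ((C/a₀)*t₀) - 1)) ≤ 0) :
    diffQuotLiminf w = diffQuotLimsup w := by
  have hle : diffQuotLiminf w ≤ diffQuotLimsup w := by
    unfold diffQuotLiminf diffQuotLimsup; exact liminf_le_limsup
  by_contra hne
  have hlt : diffQuotLiminf w < diffQuotLimsup w := hle.lt_of_ne hne
  obtain ⟨p, hp1, hp2⟩ := EReal.exists_between_coe_real hlt
  obtain ⟨q, hq1, hq2⟩ := EReal.exists_between_coe_real hp2
  have hpq : p < q := by exact_mod_cast hq1
  set c : ℝ := C/a₀ with hc_def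
  clear_value c
  have hc : 0 < c := by rw [hc_def]; exact div_pos hC ha₀
  set β : ℝ := (p+q)/2 with hβ_def
  clear_value β
  set β₀ : ℝ := |p| + |q| with hβ₀_def
  clear_value β₀
  have hβ₀ : 0 ≤ β₀ := by rw [hβ₀_def]; positivity
  have hβabs : |β| ≤ β₀ := by
    have := abs_add_le p q
    calc |β| = |p+q|/2 := by rw [hβ_def, abs_div]; norm_num
    _ ≤ (|p|+|q|)/2 := by linarith
    _ ≤ β₀ := by rw [hβ₀_def]; linarith [abs_nonneg p, abs_nonneg q]
  set M₀ : ℝ := |w 0| + β₀*δ₁ with hM₀_def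
  clear_value M₀
  have hM₀ : 0 ≤ M₀ := by
    rw [hM₀_def]; have := mul_nonneg hβ₀ hδ₁.le; have := abs_nonneg (w 0); linarith
  have hB₀ : 0 ≤ B₀ := le_trans (abs_nonneg _) (hH0 0 ⟨le_refl 0, hδ₁.le⟩)
  set b : ℝ := (lam*M₀ + B₀ + C*β₀)/a₀ + 2 with hb_def
  clear_value b
  have hbnum : 0 ≤ lam*M₀ + B₀ + C*β₀ := by
    have := mul_nonneg hlam.le hM₀; have := mul_nonneg hC.le hβ₀; linarith
  have hb : 0 < b := by
    have h0 : 0 ≤ (lam*M₀ + B₀ + C*β₀)/a₀ := div_nonneg hbnum ha₀.le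
    rw [hb_def]; linarith
  have hab : a₀ * b = lam*M₀ + B₀ + C*β₀ + 2*a₀ := by
    rw [hb_def]; field_simp
  -- choose the cap for T
  set Tcap : ℝ := min δ₁ (min ((q-p)/(4*b)) (a₀/(2*lam*b*δ₁ + 1))) with hTcap_def
  clear_value Tcap
  have hTcap_pos : 0 < Tcap := by
    have h1 : 0 < (q-p)/(4*b) := div_pos (by linarith) (by linarith)
    have h2 : 0 < 2*lam*b*δ₁ + 1 := by
      have := mul_pos (mul_pos hlam hb) hδ₁; linarith
    rw [hTcap_def]; exact lt_min hδ₁ (lt_min h1 (div_pos ha₀ h2))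
  -- pick T with small difference quotient
  have hp1' : Filter.liminf (fun t : ℝ => (((w t - w 0) / t : ℝ) : EReal)) (𝓝[>] (0:ℝ))
      < (p : EReal) := hp1
  have hfreqlow : ∃ᶠ t in 𝓝[>] (0:ℝ), (((w t - w 0)/t : ℝ) : EReal) < (p : EReal) :=
    frequently_lt_of_liminf_lt (h := hp1')
  have hmemT : Set.Ioo (0:ℝ) Tcap ∈ 𝓝[>] (0:ℝ) := Ioo_mem_nhdsGT_of_mem ⟨le_refl 0, hTcap_pos⟩
  obtain ⟨T, hTlow, hTmem⟩ :=
    (hfreqlow.and_eventually (eventually_of_mem hmemT (fun _ h => h))).exists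
  rw [hTcap_def] at hTmem
  have hT0 : 0 < T := hTmem.1
  have hT1 : T ≤ δ₁ := le_trans hTmem.2.le (min_le_left _ _)
  have hT2 : T ≤ (q-p)/(4*b) := le_trans hTmem.2.le (le_trans (min_le_right _ _) (min_le_left _ _))
  have hT3 : T ≤ a₀/(2*lam*b*δ₁ + 1) :=
    le_trans hTmem.2.le (le_trans (min_le_right _ _) (min_le_right _ _))
  -- pick t* < T with large difference quotient
  have hq2' : (q : EReal) < Filter.limsup (fun t : ℝ => (((w t - w 0) / t : ℝ) : EReal))
      (𝓝[>] (0:ℝ)) := hq2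
  have hfreqhigh : ∃ᶠ t in 𝓝[>] (0:ℝ), (q : EReal) < (((w t - w 0)/t : ℝ) : EReal) :=
    frequently_lt_of_lt_limsup (h := hq2')
  have hmemts : Set.Ioo (0:ℝ) T ∈ 𝓝[>] (0:ℝ) := Ioo_mem_nhdsGT_of_mem ⟨le_refl 0, hT0⟩
  obtain ⟨ts, htshigh, htsmem⟩ :=
    (hfreqhigh.and_eventually (eventually_of_mem hmemts (fun _ h => h))).exists
  have hts0 : 0 < ts := htsmem.1
  have htsT : ts < T := htsmem.2
  -- real inequalities
  have hwT : w T - w 0 < p * T := by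
    have h' : (w T - w 0)/T < p := by exact_mod_cast hTlow
    exact (div_lt_iff₀ hT0).mp h'
  have hwts : q * ts < w ts - w 0 := by
    have h' : q < (w ts - w 0)/ts := by exact_mod_cast htshigh
    exact (lt_div_iff₀ hts0).mp h'
  -- barrier functions
  set ψ : ℝ → ℝ := fun s => (b/c^2)*(Real.exp (c*s) - 1 - c*s) with hψ_def
  clear_value ψ
  set φ : ℝ → ℝ := fun s => w 0 + β*s - ψ s with hφ_def
  clear_value φ
  have hψ0 : ψ 0 = 0 := by simp [hψ_def]
  have hψnonneg : ∀ s : ℝ, 0 ≤ s → 0 ≤ ψ s := by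
    intro s hs
    have h1 : c*s + 1 ≤ Real.exp (c*s) := Real.add_one_le_exp (c*s)
    have h2 : (0:ℝ) ≤ b/c^2 := div_nonneg hb.le (by positivity)
    have h3 : 0 ≤ Real.exp (c*s) - 1 - c*s := by linarith
    rw [hψ_def]
    exact mul_nonneg h2 h3
  have hψquad : ∀ s : ℝ, 0 ≤ s → s ≤ δ₁ → ψ s ≤ 2*b*s^2 := by
    intro s hs hsδ
    have hx0 : 0 ≤ c*s := mul_nonneg hc.le hs
    have hx1 : c*s ≤ 1/2 :=
      le_trans (mul_le_mul_of_nonneg_left hsδ hc.le) hcδ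
    have h := exp_sub_one_sub_le hx0 hx1
    have h2 : (0:ℝ) ≤ b/c^2 := div_nonneg hb.le (by positivity)
    have h3 : ψ s ≤ (b/c^2)*(2*(c*s)^2) := by
      rw [hψ_def]
      exact mul_le_mul_of_nonneg_left h h2
    calc ψ s ≤ (b/c^2)*(2*(c*s)^2) := h3
    _ = 2*b*s^2 := by field_simp
  -- maximum of w - φ on [0, T]
  set g : ℝ → ℝ := fun s => w s - φ s with hg_def
  clear_value g
  have hφcont : Continuous φ := by
    rw [hφ_def, hψ_def]; fun_prop
  have hgUSC : UpperSemicontinuousOn g (Set.Icc 0 T) := by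
    have h1 : UpperSemicontinuousOn w (Set.Icc 0 T) :=
      hUSC.mono (Icc_subset_Icc_right hT1)
    intro x hx r hr
    have hφx : ContinuousWithinAt φ (Set.Icc 0 T) x := hφcont.continuousWithinAt
    -- g = w - φ; USC of w plus continuity of φ
    have hsum := (h1 x hx)
    -- use: eventually w < r' and φ close
    have hgap : g x < r := hr
    obtain ⟨ε, hε, hεr⟩ : ∃ ε > 0, g x + 2*ε ≤ r := ⟨(r - g x)/3, by linarith, by linarith⟩
    have hw' : ∀ᶠ z in 𝓝[Set.Icc 0 T] x, w z < w x + ε := hsum (w x + ε) (by linarith)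
    have hφ' : ∀ᶠ z in 𝓝[Set.Icc 0 T] x, |φ z - φ x| < ε := by
      have := hφx (Metric.ball_mem_nhds (φ x) hε)
      filter_upwards [this] with z hz
      simpa [Real.dist_eq] using hz
    filter_upwards [hw', hφ'] with z h1z h2z
    have : g z < g x + 2*ε := by
      rw [hg_def]
      simp only
      have := abs_lt.mp h2z
      simp only [hg_def] at *
      linarith
    linarith
  obtain ⟨t₀, ht₀K, ht₀max⟩ := usc_exists_max isCompact_Icc ⟨0, le_refl 0, hT0.le⟩ hgUSC
  -- values of g at 0, ts, T
  have hg0 : g 0 = 0 := by simp [hg_def, hφ_def, hψ0]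
  have hgts : 0 < g ts := by
    have hψts := hψnonneg ts hts0.le
    have e : q*ts - β*ts = ((q-p)/2)*ts := by rw [hβ_def]; ring
    have : 0 < ((q-p)/2)*ts := mul_pos (by linarith) hts0
    simp only [hg_def, hφ_def]
    linarith
  have hgT : g T ≤ 0 := by
    have hψT := hψquad T hT0.le hT1
    have h4b : T*(4*b) ≤ q-p := (le_div_iff₀ (by linarith)).mp hT2
    have e : p*T - β*T = -(((q-p)/2)*T) := by rw [hβ_def]; ring
    have h5 : (T*(4*b))*T ≤ (q-p)*T := mul_le_mul_of_nonneg_right h4b hT0.le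
    have e2 : (T*(4*b))*T = 4*(b*T^2) := by ring
    have e3 : 2*b*T^2 = 2*(b*T^2) := by ring
    have e4 : ((q-p)/2)*T = ((q-p)*T)/2 := by ring
    simp only [hg_def, hφ_def]
    linarith
  -- t₀ is interior
  have ht₀ts : g ts ≤ g t₀ := ht₀max ts ⟨hts0.le, htsT.le⟩
  have ht₀pos : 0 < t₀ := by
    rcases eq_or_lt_of_le ht₀K.1 with h | h
    · exfalso; rw [← h, hg0] at ht₀ts; linarith
    · exact h
  have ht₀T : t₀ < T := by
    rcases eq_or_lt_of_le ht₀K.2 with h | h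
    · exfalso; rw [h] at ht₀ts; linarith
    · exact h
  -- apply the viscosity inequality
  have hmaxhyp : ∀ s ∈ Set.Icc (0:ℝ) T,
      w s - (w 0 + β*s - (b/c^2)*(Real.exp (c*s) - 1 - c*s))
        ≤ w t₀ - (w 0 + β*t₀ - (b/c^2)*(Real.exp (c*t₀) - 1 - c*t₀)) := by
    intro s hs
    have := ht₀max s hs
    simpa [hg_def, hφ_def, hψ_def] using this
  have hcontr := hvisc T hT0 hT1 t₀ ⟨ht₀pos, ht₀T⟩ β b hb hmaxhyp
  -- lower bounds to contradict hcontr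
  set E : ℝ := Real.exp (c*t₀) with hE_def
  clear_value E
  have hE1 : 1 ≤ E := by
    rw [hE_def]; exact Real.one_le_exp (mul_nonneg hc.le ht₀pos.le)
  have ht₀Icc : t₀ ∈ Set.Icc (0:ℝ) δ₁ := ⟨ht₀pos.le, le_trans ht₀T.le hT1⟩
  have h_a : a₀ ≤ A t₀ := haLB t₀ ht₀Icc
  have h_w : φ t₀ < w t₀ := by
    have : 0 < g t₀ := lt_of_lt_of_le hgts ht₀ts
    simp only [hg_def] at this; linarith
  have h_lamw : lam * φ t₀ ≤ lam * w t₀ := mul_le_mul_of_nonneg_left h_w.le hlam.le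
  have hβt₀ : -(β₀*δ₁) ≤ β*t₀ := by
    have h1 : |β*t₀| ≤ β₀*δ₁ := by
      rw [abs_mul]
      exact mul_le_mul hβabs (by rw [abs_of_nonneg ht₀pos.le]; exact ht₀Icc.2)
        (abs_nonneg _) hβ₀
    linarith [neg_abs_le (β*t₀)]
  have h_ψlam : lam * ψ t₀ ≤ a₀ := by
    have h1 : ψ t₀ ≤ 2*b*t₀^2 := hψquad t₀ ht₀pos.le ht₀Icc.2
    have h2 : t₀^2 ≤ δ₁*T := by
      have := mul_le_mul ht₀Icc.2 ht₀T.le ht₀pos.le hδ₁.le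
      calc t₀^2 = t₀*t₀ := sq t₀
      _ ≤ δ₁*T := this
    have h3 : T*(2*lam*b*δ₁ + 1) ≤ a₀ := by
      have hpos : (0:ℝ) < 2*lam*b*δ₁ + 1 := by
        have := mul_pos (mul_pos hlam hb) hδ₁; linarith
      exact (le_div_iff₀ hpos).mp hT3
    have p1 : lam*(ψ t₀) ≤ lam*(2*b*t₀^2) := mul_le_mul_of_nonneg_left h1 hlam.le
    have p3 : (2*lam*b)*(t₀^2) ≤ (2*lam*b)*(δ₁*T) := by
      refine mul_le_mul_of_nonneg_left h2 ?_
      have := mul_pos (mul_pos hlam hb) hδ₁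
      have := mul_pos hlam hb
      linarith
    have e1 : lam*(2*b*t₀^2) = (2*lam*b)*(t₀^2) := by ring
    have e2 : (2*lam*b)*(δ₁*T) = T*(2*lam*b*δ₁) := by ring
    have e3 : T*(2*lam*b*δ₁ + 1) = T*(2*lam*b*δ₁) + T := by ring
    linarith
  have h_φlow : -M₀ - ψ t₀ ≤ φ t₀ := by
    simp only [hφ_def, hM₀_def]
    have := neg_abs_le (w 0)
    linarith
  -- Hf bound
  set P : ℝ := β - (b/c)*(E - 1) with hP_def
  clear_value P
  have hPabs : |P| ≤ β₀ + (b/c)*(E-1) := by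
    have h1 : 0 ≤ (b/c)*(E-1) := mul_nonneg (div_nonneg hb.le hc.le) (by linarith)
    rw [hP_def]
    calc |β - (b/c)*(E-1)| ≤ |β| + |(b/c)*(E-1)| := abs_sub _ _
    _ = |β| + (b/c)*(E-1) := by rw [abs_of_nonneg h1]
    _ ≤ β₀ + (b/c)*(E-1) := by linarith
  have hCbc : C*(b/c) = a₀*b := by
    rw [hc_def]
    field_simp
  have h_H : -B₀ - C*β₀ - a₀*b*(E - 1) ≤ Hf t₀ P := by
    have h1 := hHLip t₀ ht₀Icc P
    have h2 := hH0 t₀ ht₀Icc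
    have h3 : C*|P| ≤ C*β₀ + a₀*b*(E-1) := by
      have := mul_le_mul_of_nonneg_left hPabs hC.le
      calc C*|P| ≤ C*(β₀ + (b/c)*(E-1)) := this
      _ = C*β₀ + C*(b/c)*(E-1) := by ring
      _ = C*β₀ + a₀*b*(E-1) := by rw [hCbc]
    have h4 : -B₀ ≤ Hf t₀ 0 := by
      have := abs_le.mp h2; linarith [this.1]
    linarith
  -- combine
  have hAE : a₀*(b*E) ≤ A t₀ * (b*E) :=
    mul_le_mul_of_nonneg_right h_a (mul_nonneg hb.le (by linarith))
  have hφt₀ : -M₀ - ψ t₀ ≤ φ t₀ := h_φlow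
  have hlamφ : -(lam*M₀) - a₀ ≤ lam * φ t₀ := by
    have := mul_le_mul_of_nonneg_left hφt₀ hlam.le
    have h2 : lam * (-M₀ - ψ t₀) = -(lam*M₀) - lam*ψ t₀ := by ring
    linarith
  have e1 : A t₀ * (-(b*E)) = -(A t₀ * (b*E)) := by ring
  have e3 : a₀*(b*E) - a₀*b*(E-1) = a₀*b := by ring
  have final : lam * w t₀ - A t₀ * (-(b * E)) + Hf t₀ P ≥ a₀ := by
    linarith [h_lamw, hlamφ, hAE, h_H, e1, e3, hab]
  linarith [le_trans final hcontr]

set_option maxHeartbeats 1600000 in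
/-- Lemma 4.2 (iv), key lemma, nondegenerate branches.
Under the steady assumptions, if `u − v` attains its maximum over `Γ` at `O`,
then on every edge with `a_i(O) > 0` the difference quotients of `u_i` and
`v_i` at `0⁺` have limits: `p̲_i = p̄_i` and `q̲_i = q̄_i`. -/
theorem key_lemma_nondegenerate (N : ℕ) (D : Data N) (C : ℝ)
    (hSteady : Steady D C)
    (u v : Fin N → ℝ → ℝ) (hu : IsSubsol D u) (hv : IsSupersol D v)
    (hmax : ∀ i, ∀ t ∈ Set.Icc (0:ℝ) (D.ℓ i), u i t - v i t ≤ u i 0 - v i 0) :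
    ∀ i, 0 < D.a i 0 →
      diffQuotLiminf (u i) = diffQuotLimsup (u i) ∧
      diffQuotLiminf (v i) = diffQuotLimsup (v i) := by
  obtain ⟨hCpos, hHam, hdiff, hcoer, hkirch⟩ := hSteady
  obtain ⟨huU, huG, huV⟩ := hu
  obtain ⟨hvL, hvG, hvV⟩ := hv
  intro i hai
  have hℓ : 0 < D.ℓ i := D.ℓ_pos i
  have ha₀ : 0 < D.a i 0 / 2 := by linarith
  -- a is bounded below near 0
  have hcw : ContinuousWithinAt (D.a i) (Set.Icc 0 (D.ℓ i)) 0 :=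
    D.a_cont i 0 ⟨le_refl 0, hℓ.le⟩
  have hev : (D.a i) ⁻¹' (Set.Ioi (D.a i 0 / 2)) ∈ 𝓝[Set.Icc 0 (D.ℓ i)] 0 :=
    hcw (Ioi_mem_nhds (by linarith))
  rw [Metric.mem_nhdsWithin_iff] at hev
  obtain ⟨δ', hδ'pos, hδ'sub⟩ := hev
  -- choose δ₁
  set δ₁ : ℝ := min (min (δ'/2) (D.ℓ i/2)) ((D.a i 0/2)/(2*C)) with hδ₁_def
  have hδ₁pos : 0 < δ₁ := by
    rw [hδ₁_def]
    exact lt_min (lt_min (by linarith) (by linarith)) (by positivity)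
  have hδ₁δ' : δ₁ ≤ δ'/2 := le_trans (min_le_left _ _) (min_le_left _ _)
  have hδ₁ℓ : δ₁ ≤ D.ℓ i/2 := le_trans (min_le_left _ _) (min_le_right _ _)
  have hδ₁C : δ₁ ≤ (D.a i 0/2)/(2*C) := min_le_right _ _
  clear_value δ₁
  have hδ₁ℓ' : δ₁ < D.ℓ i := lt_of_le_of_lt hδ₁ℓ (by linarith)
  have hIccsub : Set.Icc (0:ℝ) δ₁ ⊆ Set.Icc 0 (D.ℓ i) :=
    Set.Icc_subset_Icc_right hδ₁ℓ'.le
  have hcδ : (C/(D.a i 0/2)) * δ₁ ≤ 1/2 := by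
    rw [div_mul_eq_mul_div, div_le_div_iff₀ ha₀ (by norm_num : (0:ℝ) < 2)]
    have := (le_div_iff₀ (by positivity : (0:ℝ) < 2*C)).mp hδ₁C
    nlinarith
  have haLB : ∀ t ∈ Set.Icc (0:ℝ) δ₁, D.a i 0/2 ≤ D.a i t := by
    intro t ht
    have h1 : t ∈ Metric.ball (0:ℝ) δ' := by
      rw [Metric.mem_ball, Real.dist_eq, sub_zero, abs_of_nonneg ht.1]
      linarith [ht.2]
    exact (hδ'sub ⟨h1, hIccsub ht⟩).le
  -- bound for H(·,0)
  have hHcont : ContinuousOn (fun t => D.H i t 0) (Set.Icc 0 (D.ℓ i)) := by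
    have := (D.H_cont i).comp
      ((continuous_id.prodMk continuous_const).continuousOn
        (s := Set.Icc 0 (D.ℓ i)))
      (fun t ht => ⟨ht, Set.mem_univ (0:ℝ)⟩)
    exact this
  obtain ⟨B₀, hB₀⟩ := isCompact_Icc.exists_bound_of_continuousOn hHcont
  have hH0 : ∀ t ∈ Set.Icc (0:ℝ) δ₁, |D.H i t 0| ≤ B₀ := by
    intro t ht
    have := hB₀ t (hIccsub ht)
    simpa [Real.norm_eq_abs] using this
  have hHLip : ∀ t ∈ Set.Icc (0:ℝ) δ₁, ∀ p : ℝ, D.H i t 0 - C * |p| ≤ D.H i t p := by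
    intro t ht p
    have := (hHam i).2 t (hIccsub ht) p 0
    rw [sub_zero] at this
    have := abs_le.mp this
    linarith [this.1]
  have hcne : (C/(D.a i 0/2)) ≠ 0 := (div_pos hCpos ha₀).ne'
  constructor
  · -- subsolution part
    apply core_sub (u i) (D.a i) (D.H i) D.lam C (D.a i 0/2) B₀ δ₁
      D.lam_pos hCpos ha₀ hδ₁pos hcδ haLB hH0 hHLip
      ((huU i).mono hIccsub)
    intro T hT0 hT1 t₀ ht₀ β b hb hmaxpt
    set c : ℝ := C/(D.a i 0/2) with hc_def
    set Bfun : ℝ → ℝ :=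
      fun s => u i 0 + β*s - (b/c^2)*(Real.exp (c*s) - 1 - c*s) with hBfun_def
    set Φ : Fin N → ℝ → ℝ := fun j => if j = i then Bfun else fun _ => u i 0 with hΦ_def
    have hΦi : Φ i = Bfun := by simp [hΦ_def]
    have htest : IsTest Φ := by
      constructor
      · intro j k
        by_cases hj : j = i <;> by_cases hk : k = i <;>
          simp [hΦ_def, hj, hk, hBfun_def, Real.exp_zero]
      · intro j
        by_cases hj : j = i
        · rw [hΦ_def]; simp only [hj, if_pos rfl]
          rw [hBfun_def]; exact contDiff_barrier _ _ _ _
        · rw [hΦ_def]; simp only [if_neg hj]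
          exact contDiff_const
    have hlocmax : LocalMaxEdge D (fun j s => u j s - Φ j s) i t₀ := by
      refine ⟨min t₀ (T - t₀), lt_min ht₀.1 (by linarith [ht₀.2]), ?_⟩
      intro s hs hsd
      have hsd' := abs_lt.mp hsd
      have hsT : s ∈ Set.Icc (0:ℝ) T := by
        constructor
        · exact hs.1
        · have : s - t₀ < T - t₀ := lt_of_lt_of_le hsd'.2 (min_le_right _ _)
          linarith
      have ht₀T : t₀ ∈ Set.Icc (0:ℝ) T := ⟨ht₀.1.le, ht₀.2.le⟩
      have h1 := hmaxpt s hsT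
      simpa only [hΦi, hBfun_def] using h1
    have hG := (huV Φ htest).1 i t₀ ⟨ht₀.1, lt_of_lt_of_le ht₀.2 (le_trans hT1 hδ₁ℓ'.le)⟩ hlocmax
    rw [hΦi, hBfun_def] at hG
    rw [deriv_deriv_barrier (u i 0) β b c hcne, deriv_barrier (u i 0) β b c hcne] at hG
    simp only [G] at hG
    beta_reduce at hG
    exact hG
  · -- supersolution part
    have hcore : diffQuotLiminf (fun t => -(v i t)) = diffQuotLimsup (fun t => -(v i t)) := by
      apply core_sub (fun t => -(v i t)) (D.a i) (fun t p => -(D.H i t (-p)))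
        D.lam C (D.a i 0/2) B₀ δ₁ D.lam_pos hCpos ha₀ hδ₁pos hcδ haLB
      · intro t ht
        simpa using hH0 t ht
      · intro t ht p
        have h1 := (hHam i).2 t (hIccsub ht) (-p) 0
        rw [sub_zero, abs_neg] at h1
        have h2 := abs_le.mp h1
        simp only [neg_zero]
        linarith [h2.2]
      · -- USC of -v
        intro x hx y hy
        have hlsc := hvL i x (hIccsub hx) (-y) (by simpa using neg_lt_neg hy)
        have hmono : 𝓝[Set.Icc (0:ℝ) δ₁] x ≤ 𝓝[Set.Icc 0 (D.ℓ i)] x :=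
          nhdsWithin_mono x hIccsub
        filter_upwards [hmono hlsc] with z hz
        simpa using neg_lt_neg hz
      · intro T hT0 hT1 t₀ ht₀ β b hb hmaxpt
        set c : ℝ := C/(D.a i 0/2) with hc_def
        set BB : ℝ → ℝ :=
          fun s => -(v i 0) + β*s - (b/c^2)*(Real.exp (c*s) - 1 - c*s) with hBB_def
        set Ψ : Fin N → ℝ → ℝ :=
          fun j => if j = i then (fun s => -((-(v i 0)) + β*s - (b/c^2)*(Real.exp (c*s) - 1 - c*s)))
            else fun _ => v i 0 with hΨ_def
        have hΨi : Ψ i = fun s => -((-(v i 0)) + β*s - (b/c^2)*(Real.exp (c*s) - 1 - c*s)) := by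
          simp [hΨ_def]
        have htest : IsTest Ψ := by
          constructor
          · intro j k
            by_cases hj : j = i <;> by_cases hk : k = i <;>
              simp [hΨ_def, hj, hk, Real.exp_zero]
          · intro j
            by_cases hj : j = i
            · rw [hΨ_def]; simp only [hj, if_pos rfl]
              exact (contDiff_barrier _ _ _ _).neg
            · rw [hΨ_def]; simp only [if_neg hj]
              exact contDiff_const
        have hlocmin : LocalMinEdge D (fun j s => v j s - Ψ j s) i t₀ := by
          refine ⟨min t₀ (T - t₀), lt_min ht₀.1 (by linarith [ht₀.2]), ?_⟩
          intro s hs hsd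
          have hsd' := abs_lt.mp hsd
          have hsT : s ∈ Set.Icc (0:ℝ) T := by
            refine ⟨hs.1, ?_⟩
            have : s - t₀ < T - t₀ := lt_of_lt_of_le hsd'.2 (min_le_right _ _)
            linarith
          have h1 := hmaxpt s hsT
          simp only [hΨi]
          beta_reduce at h1
          linarith
        have hG := (hvV Ψ htest).1 i t₀
          ⟨ht₀.1, lt_of_lt_of_le ht₀.2 (le_trans hT1 hδ₁ℓ'.le)⟩ hlocmin
        rw [hΨi] at hG
        rw [deriv_deriv_nbarrier (-(v i 0)) β b c hcne, deriv_nbarrier (-(v i 0)) β b c hcne] at hG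
        simp only [G] at hG
        beta_reduce at hG
        have e1 : D.lam * -(v i t₀) = -(D.lam * (v i t₀)) := by ring
        have e2 : D.a i t₀ * -(b * Real.exp (c * t₀)) = -(D.a i t₀ * (b * Real.exp (c * t₀))) := by
          ring
        beta_reduce
        linarith
    -- convert back from -v to v
    have hfun : (fun t : ℝ => ((((-(v i t)) - (-(v i 0))) / t : ℝ) : EReal))
        = -(fun t : ℝ => (((v i t - v i 0)/t : ℝ) : EReal)) := by
      funext t
      simp only [Pi.neg_apply]
      rw [← EReal.coe_neg]
      congr 1
      ring
    unfold diffQuotLiminf diffQuotLimsup at hcore ⊢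
    rw [hfun, EReal.liminf_neg, EReal.limsup_neg] at hcore
    have := neg_injective hcore
    exact this.symm

end Paper
end

section
/- Hopf lemma for viscosity subsolutions on an interval: let ℓ > 0, λ > 0, L > 0, and let a : [0,ℓ] → [0,∞) satisfy a = σ² for some Lipschitz function σ, with a(0) > 0. Let w : [0,ℓ] → ℝ be upper semicontinuous and a viscosity subsolution of λw − a(x)w_xx − L|w_x| ≤ 0 on (0,ℓ), meaning: for every φ ∈ C²((0,ℓ)) and every local maximum point x₀ ∈ (0,ℓ) of w − φ, one has λw(x₀) − a(x₀)φ''(x₀) − L|φ'(x₀)| ≤ 0. If w has a strict local maximum at 0 with w(0) > 0, and w has a one-sided derivative w_x(0) = lim_{x→0⁺}(w(x)−w(0))/x, then −w_x(0) > 0. -/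
open Set Filter Topology

lemma usc_exists_max {α : Type*} [TopologicalSpace α] {s : Set α}
    (hs : IsCompact s) (hne : s.Nonempty) {f : α → ℝ}
    (hf : UpperSemicontinuousOn f s) : ∃ x ∈ s, ∀ y ∈ s, f y ≤ f x := by
  by_contra h
  push_neg at h
  choose! y hy hlt using h
  have hU : ∀ x ∈ s, ∃ U ∈ 𝓝 x, ∀ z ∈ U ∩ s, f z < f (y x) := by
    intro x hx
    have h1 : {z | f z < f (y x)} ∈ 𝓝[s] x := hf x hx _ (hlt x hx)
    obtain ⟨u, huo, hxu, hsub⟩ := mem_nhdsWithin.1 h1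
    exact ⟨u, huo.mem_nhds hxu, fun z hz => hsub hz⟩
  choose! U hUn hUlt using hU
  obtain ⟨t, hts, hcov⟩ := hs.elim_nhds_subcover U hUn
  have htne : t.Nonempty := by
    obtain ⟨z, hz⟩ := hne
    obtain ⟨x, hxt, -⟩ := mem_iUnion₂.1 (hcov hz)
    exact ⟨x, hxt⟩
  obtain ⟨b, hbt, hbmax⟩ := t.exists_max_image (fun x => f (y x)) htne
  have hybs : y b ∈ s := hy b (hts b hbt)
  obtain ⟨c, hct, hybU⟩ := mem_iUnion₂.1 (hcov hybs)
  exact absurd (hUlt c (hts c hct) (y b) ⟨hybU, hybs⟩) (not_lt.2 (hbmax c hct))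

/-- Lemma A.3, Hopf lemma for viscosity subsolutions on an
interval.  Let `a = σ²` with `σ` Lipschitz on `[0,ℓ]` and `a(0) > 0`, and let
`w` be an upper semicontinuous viscosity subsolution of
`λ w − a(x) w'' − L |w'| ≤ 0` on `(0,ℓ)`.  If `w` has a strict local maximum
at `0` with `w(0) > 0` and `w` has a one-sided derivative `d` at `0`, then
`−d > 0`. -/
theorem hopf_lemma (ℓ lam L : ℝ) (hℓ : 0 < ℓ) (hlam : 0 < lam) (hL : 0 < L)
    (a : ℝ → ℝ)
    (ha : ∃ σ : ℝ → ℝ, (∃ C : NNReal, LipschitzOnWith C σ (Set.Icc 0 ℓ)) ∧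
      ∀ t ∈ Set.Icc (0:ℝ) ℓ, a t = (σ t) ^ 2)
    (ha0 : 0 < a 0)
    (w : ℝ → ℝ) (hw : UpperSemicontinuousOn w (Set.Icc 0 ℓ))
    (hsub : ∀ φ : ℝ → ℝ, ContDiff ℝ 2 φ → ∀ x₀ ∈ Set.Ioo (0:ℝ) ℓ,
      (∃ δ > 0, ∀ s ∈ Set.Ioo (0:ℝ) ℓ, |s - x₀| < δ →
        w s - φ s ≤ w x₀ - φ x₀) →
      lam * w x₀ - a x₀ * deriv (deriv φ) x₀ - L * |deriv φ x₀| ≤ 0)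
    (hmax : ∃ δ > 0, ∀ x : ℝ, 0 < x → x ≤ δ → x ≤ ℓ → w x < w 0)
    (hpos : 0 < w 0)
    (d : ℝ)
    (hder : Filter.Tendsto (fun x => (w x - w 0) / x) (𝓝[>] (0:ℝ)) (𝓝 d)) :
    0 < -d := by
  obtain ⟨σ, ⟨C, hσlip⟩, haσ⟩ := ha
  obtain ⟨δ, hδ, hδmax⟩ := hmax
  -- continuity of `a` at 0 within `[0, ℓ]`, giving a lower bound near 0
  have hacont : ContinuousWithinAt a (Icc 0 ℓ) 0 := by
    have h1 : ContinuousWithinAt (fun t => (σ t) ^ 2) (Icc 0 ℓ) 0 :=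
      ((hσlip.continuousOn.continuousWithinAt (left_mem_Icc.2 hℓ.le)).pow 2)
    exact h1.congr haσ (haσ 0 (left_mem_Icc.2 hℓ.le))
  have hev : ∀ᶠ x in 𝓝[Icc 0 ℓ] 0, a 0 / 2 < a x :=
    hacont.eventually (eventually_gt_nhds (by linarith))
  obtain ⟨ε, hε, hball⟩ := Metric.mem_nhdsWithin_iff.1 hev
  -- choose the radius r
  obtain ⟨r, hr0, hrℓ, hrδ, hrε⟩ : ∃ r : ℝ, 0 < r ∧ r < ℓ ∧ r ≤ δ ∧ r < ε := by
    refine ⟨min (min (ε / 2) δ) (ℓ / 2), ?_, ?_, ?_, ?_⟩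
    · exact lt_min (lt_min (by linarith) hδ) (by linarith)
    · exact lt_of_le_of_lt (min_le_right _ _) (by linarith)
    · exact le_trans (min_le_left _ _) (min_le_right _ _)
    · exact lt_of_le_of_lt (le_trans (min_le_left _ _) (min_le_left _ _)) (by linarith)
  have halow : ∀ x ∈ Icc (0:ℝ) r, a 0 / 2 < a x := by
    intro x hx
    apply hball
    constructor
    · rw [Metric.mem_ball, Real.dist_eq, sub_zero, abs_of_nonneg hx.1]
      exact lt_of_le_of_lt hx.2 hrε
    · exact ⟨hx.1, le_trans hx.2 hrℓ.le⟩
  have hwr : w r < w 0 := hδmax r hr0 hrδ hrℓ.le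
  -- constants
  obtain ⟨K, hK0, hKa⟩ : ∃ K : ℝ, 0 < K ∧ L < a 0 / 2 * K := by
    refine ⟨2 * L / a 0 + 1, by positivity, ?_⟩
    have h : a 0 / 2 * (2 * L / a 0 + 1) = L + a 0 / 2 := by field_simp
    rw [h]; linarith
  have hE0 : 0 < Real.exp (K * r) - 1 := by
    have : Real.exp 0 < Real.exp (K * r) := Real.exp_lt_exp.2 (by positivity)
    rw [Real.exp_zero] at this; linarith
  obtain ⟨ε', hε'0, hε'E1, hε'E2⟩ : ∃ ε' : ℝ, 0 < ε' ∧
      ε' * (Real.exp (K * r) - 1) ≤ w 0 / 2 ∧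
      ε' * (Real.exp (K * r) - 1) ≤ w 0 - w r := by
    refine ⟨min (w 0 / 2) (w 0 - w r) / (Real.exp (K * r) - 1), ?_, ?_, ?_⟩
    · exact div_pos (lt_min (by linarith) (by linarith)) hE0
    · rw [div_mul_cancel₀ _ hE0.ne']; exact min_le_left _ _
    · rw [div_mul_cancel₀ _ hE0.ne']; exact min_le_right _ _
  -- the barrier
  set φ : ℝ → ℝ := fun x => w 0 - ε' * (Real.exp (K * x) - 1) with hφ_def
  have hφ0 : φ 0 = w 0 := by simp [hφ_def]
  have hφC2 : ContDiff ℝ 2 φ :=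
    contDiff_const.sub (contDiff_const.mul ((Real.contDiff_exp).comp
      (contDiff_const.mul contDiff_id) |>.sub contDiff_const))
  have hexp : ∀ x : ℝ, HasDerivAt (fun x => Real.exp (K * x)) (K * Real.exp (K * x)) x := by
    intro x
    have h1 : HasDerivAt (fun x : ℝ => K * x) K x := by
      simpa using (hasDerivAt_id x).const_mul K
    simpa [mul_comm] using h1.exp
  have hφ' : deriv φ = fun x => -(ε' * (K * Real.exp (K * x))) := by
    funext x
    exact ((((hexp x).sub_const 1).const_mul ε').const_sub (w 0)).deriv
  have hφ'' : ∀ x : ℝ, deriv (deriv φ) x = -(ε' * (K * (K * Real.exp (K * x)))) := by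
    intro x
    rw [hφ']
    exact ((((hexp x).const_mul K).const_mul ε').neg).deriv
  -- key strict supersolution inequality
  have hsuper : ∀ x ∈ Icc (0:ℝ) r,
      0 < lam * φ x - a x * deriv (deriv φ) x - L * |deriv φ x| := by
    intro x hx
    rw [hφ'', hφ']
    have he1 : (1:ℝ) ≤ Real.exp (K * x) := Real.one_le_exp (mul_nonneg hK0.le hx.1)
    have heE : Real.exp (K * x) - 1 ≤ Real.exp (K * r) - 1 := by
      have : Real.exp (K * x) ≤ Real.exp (K * r) :=
        Real.exp_le_exp.2 (mul_le_mul_of_nonneg_left hx.2 hK0.le)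
      linarith
    have habs : |(-(ε' * (K * Real.exp (K * x))))| = ε' * (K * Real.exp (K * x)) := by
      rw [abs_neg, abs_of_nonneg (mul_nonneg hε'0.le
        (mul_nonneg hK0.le (Real.exp_pos _).le))]
    rw [habs]
    have hax : a 0 / 2 < a x := halow x hx
    have hφx : w 0 / 2 ≤ φ x := by
      have h2 : ε' * (Real.exp (K * x) - 1) ≤ ε' * (Real.exp (K * r) - 1) :=
        mul_le_mul_of_nonneg_left heE hε'0.le
      simp only [hφ_def]; linarith
    have hkey : L * (ε' * (K * Real.exp (K * x)))
        < a x * (ε' * (K * (K * Real.exp (K * x)))) := by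
      have hpos' : 0 < ε' * (K * Real.exp (K * x)) :=
        mul_pos hε'0 (mul_pos hK0 (Real.exp_pos _))
      calc L * (ε' * (K * Real.exp (K * x)))
          < (a 0 / 2 * K) * (ε' * (K * Real.exp (K * x))) :=
            mul_lt_mul_of_pos_right hKa hpos'
        _ ≤ (a x * K) * (ε' * (K * Real.exp (K * x))) :=
            mul_le_mul_of_nonneg_right
              (mul_le_mul_of_nonneg_right hax.le hK0.le) hpos'.le
        _ = a x * (ε' * (K * (K * Real.exp (K * x)))) := by ring
    have hlamφ : 0 < lam * φ x := mul_pos hlam (lt_of_lt_of_le (by linarith) hφx)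
    nlinarith [hlamφ, hkey]
  -- maximum of w - φ on [0, r]
  have husc : UpperSemicontinuousOn (fun z => w z - φ z) (Icc 0 r) := by
    have h1 : UpperSemicontinuousOn w (Icc 0 r) :=
      hw.mono (Icc_subset_Icc le_rfl hrℓ.le)
    have h2 : UpperSemicontinuousOn (fun z => -φ z) (Icc 0 r) :=
      (hφC2.continuous.neg.upperSemicontinuous).upperSemicontinuousOn _
    simpa [sub_eq_add_neg] using h1.add h2
  obtain ⟨x0, hx0s, hx0max⟩ := usc_exists_max isCompact_Icc
    (nonempty_Icc.2 hr0.le) husc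
  -- w ≤ φ on [0, r]
  have hwφ : ∀ z ∈ Icc (0:ℝ) r, w z ≤ φ z := by
    have hle : w x0 - φ x0 ≤ 0 := by
      by_contra hgt
      push_neg at hgt
      have hx0ne0 : x0 ≠ 0 := by
        intro h; rw [h, hφ0] at hgt; linarith
      have hφr : w r - φ r ≤ 0 := by
        have h : φ r = w 0 - ε' * (Real.exp (K * r) - 1) := by simp [hφ_def]
        rw [h]; linarith
      have hx0ner : x0 ≠ r := by
        intro h; rw [h] at hgt; linarith
      have hx0Ioo : x0 ∈ Ioo (0:ℝ) r :=
        ⟨lt_of_le_of_ne hx0s.1 (Ne.symm hx0ne0), lt_of_le_of_ne hx0s.2 hx0ner⟩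
      have hx0Iooℓ : x0 ∈ Ioo (0:ℝ) ℓ := ⟨hx0Ioo.1, lt_trans hx0Ioo.2 hrℓ⟩
      have hloc : ∃ δ' > 0, ∀ s ∈ Ioo (0:ℝ) ℓ, |s - x0| < δ' →
          w s - φ s ≤ w x0 - φ x0 := by
        refine ⟨min x0 (r - x0), lt_min hx0Ioo.1 (by linarith [hx0Ioo.2]), ?_⟩
        intro s hs habs'
        apply hx0max
        have h1 : |s - x0| < x0 := lt_of_lt_of_le habs' (min_le_left _ _)
        have h2 : |s - x0| < r - x0 := lt_of_lt_of_le habs' (min_le_right _ _)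
        rw [abs_lt] at h1 h2
        exact ⟨by linarith [h1.1], by linarith [h2.2]⟩
      have hlew : lam * w x0 - a x0 * deriv (deriv φ) x0 - L * |deriv φ x0| ≤ 0 :=
        hsub φ hφC2 x0 hx0Iooℓ hloc
      have hstrict := hsuper x0 hx0s
      have hlt : lam * φ x0 < lam * w x0 := by
        apply mul_lt_mul_of_pos_left _ hlam; linarith
      linarith
    intro z hz
    have := hx0max z hz
    linarith
  -- conclude: d ≤ -ε' K < 0
  have hslope : Tendsto (fun x => (φ x - w 0) / x) (𝓝[>] (0:ℝ)) (𝓝 (-(ε' * K))) := by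
    have hd0 : HasDerivAt φ (-(ε' * K)) 0 := by
      have h := (((hexp 0).sub_const 1).const_mul ε').const_sub (w 0)
      simpa using h
    have h1 := hasDerivAt_iff_tendsto_slope.1 hd0
    have h2 : Tendsto (slope φ 0) (𝓝[>] (0:ℝ)) (𝓝 (-(ε' * K))) :=
      h1.mono_left (nhdsWithin_mono 0 (fun x hx => ne_of_gt hx))
    apply h2.congr'
    filter_upwards [self_mem_nhdsWithin] with x hx
    rw [slope_def_field, hφ0, sub_zero]
  have hled : d ≤ -(ε' * K) := by
    apply le_of_tendsto_of_tendsto hder hslope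
    filter_upwards [Ioc_mem_nhdsGT hr0] with x hx
    have hw' : w x ≤ φ x := hwφ x ⟨hx.1.le, hx.2⟩
    exact (div_le_div_iff_of_pos_right hx.1).2 (by linarith)
  have hfin : 0 < ε' * K := mul_pos hε'0 hK0
  linarith
end
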